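/- arXiv:1505.07905 — 2 statements merged into one kernel-verified Lean document; each statement's English description precedes it below -/
import Mathlib

section
/- If G and H are guaranteed scoring games with H = ⟨∅^h | H^R⟩ left-atomic, then Ls(G+H) ≥ L̲s(G+H) = L̲s(G) + h. -/
/-- A scoring game: `la`/`ra` are the atom values (relevant when the
corresponding option list is empty), `L`/`R` the Left and Right options. -/
inductive SG : Type
  | mk (la ra : ℝ) (L R : List SG) : SG

namespace SG

theorem sizeOf_lt_of_mem {g : SG} {l : List SG} (h : g ∈ l) : sizeOf g < sizeOf l :=
  List.sizeOf_lt_of_mem h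

noncomputable instance : DecidableEq SG := Classical.decEq _

def la : SG → ℝ | mk a _ _ _ => a
def ra : SG → ℝ | mk _ b _ _ => b
def L : SG → List SG | mk _ _ l _ => l
def R : SG → List SG | mk _ _ _ r => r

/-- The list of atom values occurring in atomic followers of a game. -/
def atomList : SG → List ℝ
  | mk a b ls rs =>
    (if ls.isEmpty then [a] else (ls.attach.map (fun x => atomList x.1)).flatten)
    ++ (if rs.isEmpty then [b] else (rs.attach.map (fun x => atomList x.1)).flatten)
decreasing_by all_goals (simp only [SG.mk.sizeOf_spec]; (first | (have := sizeOf_lt_of_mem x.2) | (have := sizeOf_lt_of_mem (by assumption : x ∈ _))); omega)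

/-- The guaranteed condition. -/
def Guaranteed : SG → Prop
  | mk a b ls rs =>
    (∀ x ∈ ls, Guaranteed x) ∧ (∀ x ∈ rs, Guaranteed x) ∧
    (ls = [] → ∀ s ∈ (mk a b ls rs).atomList, a ≤ s) ∧
    (rs = [] → ∀ s ∈ (mk a b ls rs).atomList, s ≤ b)
decreasing_by all_goals (simp only [SG.mk.sizeOf_spec]; (first | (have := sizeOf_lt_of_mem x.2) | (have := sizeOf_lt_of_mem (by assumption : x ∈ _))); omega)

/-- Disjunctive sum. -/
noncomputable def add : SG → SG → SG
  | mk a1 b1 L1 R1, mk a2 b2 L2 R2 =>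
    mk (a1 + a2) (b1 + b2)
      (L1.attach.map (fun x => add x.1 (mk a2 b2 L2 R2))
        ++ L2.attach.map (fun x => add (mk a1 b1 L1 R1) x.1))
      (R1.attach.map (fun x => add x.1 (mk a2 b2 L2 R2))
        ++ R2.attach.map (fun x => add (mk a1 b1 L1 R1) x.1))
termination_by g h => sizeOf g + sizeOf h
decreasing_by all_goals (simp only [SG.mk.sizeOf_spec]; (first | (have := sizeOf_lt_of_mem x.2) | (have := sizeOf_lt_of_mem (by assumption : x ∈ _))); omega)

/-- Left- and Right-stops (as a pair). -/
noncomputable def stops : SG → ℝ × ℝ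
  | mk a b ls rs =>
    (if ls.isEmpty then a else ((ls.attach.map (fun x => (stops x.1).2)).maximum.unbotD 0),
     if rs.isEmpty then b else ((rs.attach.map (fun x => (stops x.1).1)).minimum.untopD 0))
decreasing_by all_goals (simp only [SG.mk.sizeOf_spec]; (first | (have := sizeOf_lt_of_mem x.2) | (have := sizeOf_lt_of_mem (by assumption : x ∈ _))); omega)

noncomputable def Ls (g : SG) : ℝ := g.stops.1
noncomputable def Rs (g : SG) : ℝ := g.stops.2

/-- The conjugate: interchange Left and Right and negate atoms. -/
noncomputable def conj : SG → SG
  | mk a b ls rs =>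
    mk (-b) (-a) (rs.attach.map (fun x => conj x.1)) (ls.attach.map (fun x => conj x.1))
decreasing_by all_goals (simp only [SG.mk.sizeOf_spec]; (first | (have := sizeOf_lt_of_mem x.2) | (have := sizeOf_lt_of_mem (by assumption : x ∈ _))); omega)

/-- The game ⟨∅^s | ∅^s⟩ of a real number `s`. -/
def num (s : ℝ) : SG := mk s s [] []

/-- The zero game ⟨∅^0 | ∅^0⟩. -/
def zero : SG := num 0

/-- Waiting moves: the image of the Normal-play integer `n`. -/
def wait : ℕ → SG
  | 0 => zero
  | n + 1 => mk 0 0 [wait n] []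

/-- Birthday: the depth of the game tree. -/
def birthday : SG → ℕ
  | mk _ _ ls rs =>
    max ((ls.attach.map (fun x => birthday x.1 + 1)).maximum.unbotD 0)
        ((rs.attach.map (fun x => birthday x.1 + 1)).maximum.unbotD 0)
decreasing_by all_goals (simp only [SG.mk.sizeOf_spec]; (first | (have := sizeOf_lt_of_mem x.2) | (have := sizeOf_lt_of_mem (by assumption : x ∈ _))); omega)

/-- `Ge G H` is the order `G ≽ H`. -/
def Ge (G H : SG) : Prop :=
  ∀ X : SG, X.Guaranteed → Ls (G.add X) ≥ Ls (H.add X) ∧ Rs (G.add X) ≥ Rs (H.add X)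

/-- Equivalence `G ∼ H`. -/
def Equiv (G H : SG) : Prop := Ge G H ∧ Ge H G

/-- Right's pass-allowed Left-stop `L̲s(G) = min_n Ls(G - n̂)`. -/
noncomputable def lsU (G : SG) : ℝ := ⨅ n : ℕ, Ls (G.add (wait n).conj)

/-- Left's pass-allowed Right-stop `R̄s(G) = max_n Rs(G + n̂)`. -/
noncomputable def rsO (G : SG) : ℝ := ⨆ n : ℕ, Rs (G.add (wait n))

/-- `L̄s(G) = max_n Ls(G + n̂)`. -/
noncomputable def lsO (G : SG) : ℝ := ⨆ n : ℕ, Ls (G.add (wait n))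

/-- `R̲s(G) = min_n Rs(G + n̂)`. -/
noncomputable def rsU (G : SG) : ℝ := ⨅ n : ℕ, Rs (G.add (wait n))

/-- Identity of games: same tree structure (up to reordering of options),
with identical atoms at atomic positions. -/
def Ident : SG → SG → Prop
  | mk a1 b1 L1 R1, mk a2 b2 L2 R2 =>
    (L1 = [] ↔ L2 = []) ∧ (L1 = [] → a1 = a2) ∧
    (R1 = [] ↔ R2 = []) ∧ (R1 = [] → b1 = b2) ∧
    (∀ x ∈ L1, ∃ y : {z // z ∈ L2}, Ident x y.1) ∧
    (∀ y ∈ L2, ∃ x : {z // z ∈ L1}, Ident x.1 y) ∧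
    (∀ x ∈ R1, ∃ y : {z // z ∈ R2}, Ident x y.1) ∧
    (∀ y ∈ R2, ∃ x : {z // z ∈ R1}, Ident x.1 y)
termination_by g h => sizeOf g
decreasing_by all_goals (simp only [SG.mk.sizeOf_spec]; (first | (have := sizeOf_lt_of_mem x.2) | (have := sizeOf_lt_of_mem (by assumption : x ∈ _))); omega)

/-- `Linked H G`: `H` is linked to `G` (by some guaranteed `T`). -/
def Linked (H G : SG) : Prop :=
  ∃ T : SG, T.Guaranteed ∧ Ls (H.add T) < 0 ∧ 0 < Rs (G.add T)

/-- Replace every atom of `G` by `∅^x`. -/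
def subst (v : ℝ) : SG → SG
  | mk _ _ ls rs =>
    mk v v (ls.attach.map (fun x => subst v x.1)) (rs.attach.map (fun x => subst v x.1))
decreasing_by all_goals (simp only [SG.mk.sizeOf_spec]; (first | (have := sizeOf_lt_of_mem x.2) | (have := sizeOf_lt_of_mem (by assumption : x ∈ _))); omega)

/-- The maximum atom value in `G`. -/
noncomputable def maxAtom (G : SG) : ℝ := G.atomList.maximum.unbotD 0

/-- The minimum atom value in `G`. -/
noncomputable def minAtom (G : SG) : ℝ := G.atomList.minimum.untopD 0

set_option linter.unreachableTactic false

lemma add_def (X Y : SG) : X.add Y = mk (X.la + Y.la) (X.ra + Y.ra)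
    (X.L.map (fun x => x.add Y) ++ Y.L.map (fun y => X.add y))
    (X.R.map (fun x => x.add Y) ++ Y.R.map (fun y => X.add y)) := by
  cases X; cases Y
  rw [add]
  simp [la, ra, L, R, List.attach_map_val]

lemma la_add (X Y : SG) : (X.add Y).la = X.la + Y.la := by rw [add_def]; rfl
lemma ra_add (X Y : SG) : (X.add Y).ra = X.ra + Y.ra := by rw [add_def]; rfl
lemma L_add (X Y : SG) : (X.add Y).L = X.L.map (fun x => x.add Y) ++ Y.L.map (fun y => X.add y) := by rw [add_def]; rfl
lemma R_add (X Y : SG) : (X.add Y).R = X.R.map (fun x => x.add Y) ++ Y.R.map (fun y => X.add y) := by rw [add_def]; rfl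

lemma Ls_eq (X : SG) : Ls X = if X.L = [] then X.la else ((X.L.map Rs).maximum.unbotD 0) := by
  cases X with
  | mk a b ls rs =>
    show (stops _).1 = _
    rw [stops]
    rw [List.attach_map_val (l := ls) (f := fun g => g.stops.2)]
    simp only [L, la, List.isEmpty_iff]
    rfl

lemma Rs_eq (X : SG) : Rs X = if X.R = [] then X.ra else ((X.R.map Ls).minimum.untopD 0) := by
  cases X with
  | mk a b ls rs =>
    show (stops _).2 = _
    rw [stops]
    rw [List.attach_map_val (l := rs) (f := fun g => g.stops.1)]
    simp only [R, ra, List.isEmpty_iff]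
    rfl

lemma atomList_eq (X : SG) : X.atomList =
    (if X.L = [] then [X.la] else (X.L.map atomList).flatten)
    ++ (if X.R = [] then [X.ra] else (X.R.map atomList).flatten) := by
  cases X with
  | mk a b ls rs =>
    rw [atomList]
    simp [L, R, la, ra, List.attach_map_val, List.isEmpty_iff]
    congr
-- list max/min helpers
lemma max_unbot'_mem {α : Type*} [LinearOrder α] (d : α) {l : List α} (h : l ≠ []) :
    l.maximum.unbotD d ∈ l := by
  obtain ⟨m, hm⟩ := WithBot.ne_bot_iff_exists.1 (List.maximum_ne_bot_of_ne_nil h)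
  rw [← hm]
  exact List.maximum_mem hm.symm

lemma le_max_unbot' {α : Type*} [LinearOrder α] (d : α) {l : List α} {a : α} (h : a ∈ l) :
    a ≤ l.maximum.unbotD d := by
  obtain ⟨m, hm⟩ := WithBot.ne_bot_iff_exists.1 (List.maximum_ne_bot_of_ne_nil (List.ne_nil_of_mem h))
  rw [← hm]
  exact_mod_cast List.le_maximum_of_mem h hm.symm

lemma min_untop'_mem {α : Type*} [LinearOrder α] (d : α) {l : List α} (h : l ≠ []) :
    l.minimum.untopD d ∈ l := by
  obtain ⟨m, hm⟩ := WithTop.ne_top_iff_exists.1 (List.minimum_ne_top_of_ne_nil h)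
  rw [← hm]
  exact List.minimum_mem hm.symm

lemma min_untop'_le {α : Type*} [LinearOrder α] (d : α) {l : List α} {a : α} (h : a ∈ l) :
    l.minimum.untopD d ≤ a := by
  obtain ⟨m, hm⟩ := WithTop.ne_top_iff_exists.1 (List.minimum_ne_top_of_ne_nil (List.ne_nil_of_mem h))
  rw [← hm]
  exact_mod_cast List.minimum_le_of_mem h hm.symm

-- atomList lemmas
lemma sizeOf_lt_of_mem_L {X l : SG} (h : l ∈ X.L) : sizeOf l < sizeOf X := by
  cases X with
  | mk a b ls rs =>
    simp only [L] at h
    have := List.sizeOf_lt_of_mem h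
    simp only [mk.sizeOf_spec]
    omega

lemma sizeOf_lt_of_mem_R {X r : SG} (h : r ∈ X.R) : sizeOf r < sizeOf X := by
  cases X with
  | mk a b ls rs =>
    simp only [R] at h
    have := List.sizeOf_lt_of_mem h
    simp only [mk.sizeOf_spec]
    omega

lemma la_mem_atomList {X : SG} (h : X.L = []) : X.la ∈ X.atomList := by
  rw [atomList_eq, h]; simp

lemma ra_mem_atomList {X : SG} (h : X.R = []) : X.ra ∈ X.atomList := by
  rw [atomList_eq, h]; simp

lemma atomList_subset_L {X l : SG} (hl : l ∈ X.L) {s : ℝ} (hs : s ∈ l.atomList) :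
    s ∈ X.atomList := by
  rw [atomList_eq, if_neg (List.ne_nil_of_mem hl)]
  exact List.mem_append_left _ (List.mem_flatten.2 ⟨l.atomList, List.mem_map_of_mem hl, hs⟩)

lemma atomList_subset_R {X r : SG} (hr : r ∈ X.R) {s : ℝ} (hs : s ∈ r.atomList) :
    s ∈ X.atomList := by
  rw [atomList_eq]
  refine List.mem_append_right _ ?_
  rw [if_neg (List.ne_nil_of_mem hr)]
  exact List.mem_flatten.2 ⟨r.atomList, List.mem_map_of_mem hr, hs⟩

-- every atom of a sum is a sum of atoms
lemma atom_add : ∀ (X Y : SG), ∀ s ∈ (X.add Y).atomList,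
    ∃ u ∈ X.atomList, ∃ v ∈ Y.atomList, s = u + v := by
  intro X Y
  induction' hn : sizeOf X + sizeOf Y using Nat.strong_induction_on with n ih generalizing X Y
  subst hn
  intro s hs
  rw [atomList_eq, L_add, R_add] at hs
  rcases List.mem_append.1 hs with h | h
  · by_cases hL : X.L.map (fun x => x.add Y) ++ Y.L.map (fun y => X.add y) = []
    · rw [if_pos hL, la_add] at h
      simp only [List.mem_singleton] at h
      simp only [List.append_eq_nil_iff, List.map_eq_nil_iff] at hL
      exact ⟨X.la, la_mem_atomList hL.1, Y.la, la_mem_atomList hL.2, h⟩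
    · rw [if_neg hL] at h
      obtain ⟨t, ht, hst⟩ := List.mem_flatten.1 h
      obtain ⟨z, hz, rfl⟩ := List.mem_map.1 ht
      rcases List.mem_append.1 hz with hz | hz
      · obtain ⟨x, hx, rfl⟩ := List.mem_map.1 hz
        obtain ⟨u, hu, v, hv, rfl⟩ := ih _ (by have := sizeOf_lt_of_mem_L hx; omega) _ _ rfl s hst
        exact ⟨u, atomList_subset_L hx hu, v, hv, rfl⟩
      · obtain ⟨y, hy, rfl⟩ := List.mem_map.1 hz
        obtain ⟨u, hu, v, hv, rfl⟩ := ih _ (by have := sizeOf_lt_of_mem_L hy; omega) _ _ rfl s hst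
        exact ⟨u, hu, v, atomList_subset_L hy hv, rfl⟩
  · by_cases hR : X.R.map (fun x => x.add Y) ++ Y.R.map (fun y => X.add y) = []
    · rw [if_pos hR, ra_add] at h
      simp only [List.mem_singleton] at h
      simp only [List.append_eq_nil_iff, List.map_eq_nil_iff] at hR
      exact ⟨X.ra, ra_mem_atomList hR.1, Y.ra, ra_mem_atomList hR.2, h⟩
    · rw [if_neg hR] at h
      obtain ⟨t, ht, hst⟩ := List.mem_flatten.1 h
      obtain ⟨z, hz, rfl⟩ := List.mem_map.1 ht
      rcases List.mem_append.1 hz with hz | hz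
      · obtain ⟨x, hx, rfl⟩ := List.mem_map.1 hz
        obtain ⟨u, hu, v, hv, rfl⟩ := ih _ (by have := sizeOf_lt_of_mem_R hx; omega) _ _ rfl s hst
        exact ⟨u, atomList_subset_R hx hu, v, hv, rfl⟩
      · obtain ⟨y, hy, rfl⟩ := List.mem_map.1 hz
        obtain ⟨u, hu, v, hv, rfl⟩ := ih _ (by have := sizeOf_lt_of_mem_R hy; omega) _ _ rfl s hst
        exact ⟨u, hu, v, atomList_subset_R hy hv, rfl⟩
-- stops are atoms
lemma stops_mem_atomList : ∀ X : SG, Ls X ∈ X.atomList ∧ Rs X ∈ X.atomList := by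
  intro X
  induction' hn : sizeOf X using Nat.strong_induction_on with n ih generalizing X
  subst hn
  constructor
  · rw [Ls_eq]
    by_cases h : X.L = []
    · rw [if_pos h]; exact la_mem_atomList h
    · rw [if_neg h]
      have hmem := max_unbot'_mem 0 (l := X.L.map Rs) (by simpa using h)
      obtain ⟨l, hl, heq⟩ := List.mem_map.1 hmem
      rw [← heq]
      exact atomList_subset_L hl (ih _ (sizeOf_lt_of_mem_L hl) _ rfl).2
  · rw [Rs_eq]
    by_cases h : X.R = []
    · rw [if_pos h]; exact ra_mem_atomList h
    · rw [if_neg h]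
      have hmem := min_untop'_mem 0 (l := X.R.map Ls) (by simpa using h)
      obtain ⟨r, hr, heq⟩ := List.mem_map.1 hmem
      rw [← heq]
      exact atomList_subset_R hr (ih _ (sizeOf_lt_of_mem_R hr) _ rfl).1

-- Guaranteed unfolding & hereditary
lemma guaranteed_def {X : SG} (h : X.Guaranteed) :
    (∀ x ∈ X.L, Guaranteed x) ∧ (∀ x ∈ X.R, Guaranteed x) ∧
    (X.L = [] → ∀ s ∈ X.atomList, X.la ≤ s) ∧
    (X.R = [] → ∀ s ∈ X.atomList, s ≤ X.ra) := by
  cases X with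
  | mk a b ls rs =>
    rw [Guaranteed] at h
    exact h

-- waiting games
lemma W_zero : (wait 0).conj = mk 0 0 [] [] := by
  show (mk 0 0 [] []).conj = _
  rw [conj]
  simp

lemma W_succ (n : ℕ) : (wait (n+1)).conj = mk 0 0 [] [(wait n).conj] := by
  show (mk 0 0 [wait n] []).conj = _
  rw [conj]
  simp

lemma atom_W : ∀ n : ℕ, ∀ s ∈ ((wait n).conj).atomList, s = 0 := by
  intro n
  induction n with
  | zero => rw [W_zero, atomList_eq]; simp [L, R, la, ra]
  | succ n ih =>
    intro s hs
    rw [W_succ, atomList_eq] at hs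
    simp only [L, R, la, ra] at hs
    simp at hs
    rcases hs with h | h
    · exact h
    · exact ih _ h

-- birthday
lemma birthday_eq (X : SG) : X.birthday =
    max ((X.L.map (fun x => x.birthday + 1)).maximum.unbotD 0)
        ((X.R.map (fun x => x.birthday + 1)).maximum.unbotD 0) := by
  cases X with
  | mk a b ls rs =>
    rw [birthday]
    rw [List.attach_map_val (l := ls) (f := fun x => birthday x + 1), List.attach_map_val (l := rs) (f := fun x => birthday x + 1)]
    rfl

lemma birthday_lt_of_mem_L {X l : SG} (h : l ∈ X.L) : l.birthday < X.birthday := by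
  have : l.birthday + 1 ∈ X.L.map (fun x => x.birthday + 1) := List.mem_map_of_mem h
  have h2 := le_max_unbot' 0 this
  have h3 : l.birthday + 1 ≤ X.birthday := by
    conv_rhs => rw [birthday_eq]
    exact le_trans h2 (le_max_left _ _)
  omega

lemma birthday_lt_of_mem_R {X r : SG} (h : r ∈ X.R) : r.birthday < X.birthday := by
  have : r.birthday + 1 ∈ X.R.map (fun x => x.birthday + 1) := List.mem_map_of_mem h
  have h2 := le_max_unbot' 0 this
  have h3 : r.birthday + 1 ≤ X.birthday := by
    conv_rhs => rw [birthday_eq]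
    exact le_trans h2 (le_max_right _ _)
  omega
/-- Right's waiting game. -/
noncomputable def Wg (n : ℕ) : SG := (wait n).conj

lemma Wg_zero : Wg 0 = mk 0 0 [] [] := W_zero
lemma Wg_succ (n : ℕ) : Wg (n+1) = mk 0 0 [] [Wg n] := W_succ n
lemma WL (n : ℕ) : (Wg n).L = [] := by cases n with
  | zero => rw [Wg_zero]; rfl
  | succ n => rw [Wg_succ]; rfl
lemma WR_zero : (Wg 0).R = [] := by rw [Wg_zero]; rfl
lemma WR_succ (n : ℕ) : (Wg (n+1)).R = [Wg n] := by rw [Wg_succ]; rfl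
lemma la_W (n : ℕ) : (Wg n).la = 0 := by cases n with
  | zero => rw [Wg_zero]; rfl
  | succ n => rw [Wg_succ]; rfl
lemma ra_W (n : ℕ) : (Wg n).ra = 0 := by cases n with
  | zero => rw [Wg_zero]; rfl
  | succ n => rw [Wg_succ]; rfl

lemma atom_add_W {X : SG} {n : ℕ} {s : ℝ} (hs : s ∈ (X.add (Wg n)).atomList) :
    s ∈ X.atomList := by
  obtain ⟨u, hu, v, hv, rfl⟩ := atom_add _ _ _ hs
  rw [atom_W n v hv, add_zero]
  exact hu

lemma Ls_add_W_mem (X : SG) (n : ℕ) : Ls (X.add (Wg n)) ∈ X.atomList :=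
  atom_add_W (stops_mem_atomList _).1

lemma Rs_add_W_mem (X : SG) (n : ℕ) : Rs (X.add (Wg n)) ∈ X.atomList :=
  atom_add_W (stops_mem_atomList _).2

-- structure of X + Wg n
lemma L_add_W (X : SG) (n : ℕ) : (X.add (Wg n)).L = X.L.map (fun x => x.add (Wg n)) := by
  rw [L_add, WL]; simp

lemma R_add_W_zero (X : SG) : (X.add (Wg 0)).R = X.R.map (fun x => x.add (Wg 0)) := by
  rw [R_add, WR_zero]; simp

lemma R_add_W_succ (X : SG) (n : ℕ) :
    (X.add (Wg (n+1))).R = X.R.map (fun x => x.add (Wg (n+1))) ++ [X.add (Wg n)] := by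
  rw [R_add, WR_succ]; simp

-- the monotone (antitone-in-waiting) lemma
lemma stops_W_antitone_step : ∀ (X : SG) (m : ℕ), X.Guaranteed →
    Ls (X.add (Wg (m+1))) ≤ Ls (X.add (Wg m)) ∧
    Rs (X.add (Wg (m+1))) ≤ Rs (X.add (Wg m)) := by
  intro X m hX
  induction' hn : sizeOf X + m using Nat.strong_induction_on with n ih generalizing X m
  subst hn
  constructor
  · -- Ls part
    rw [Ls_eq, Ls_eq, L_add_W, L_add_W]
    by_cases h : X.L = []
    · simp [h, la_add, la_W]
    · rw [if_neg (by simpa using h), if_neg (by simpa using h)]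
      -- max attained on LHS
      have hmem := max_unbot'_mem 0 (l := (X.L.map (fun x => x.add (Wg (m+1)))).map Rs)
        (by simpa using h)
      obtain ⟨z, hz, heq⟩ := List.mem_map.1 hmem
      obtain ⟨l, hl, rfl⟩ := List.mem_map.1 hz
      rw [← heq]
      have h1 : Rs (l.add (Wg (m+1))) ≤ Rs (l.add (Wg m)) :=
        (ih _ (by have := sizeOf_lt_of_mem_L hl; omega) l m ((guaranteed_def hX).1 l hl) rfl).2
      refine le_trans h1 (le_max_unbot' 0 ?_)
      exact List.mem_map_of_mem (List.mem_map_of_mem hl)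
  · -- Rs part
    by_cases hstuck : X.R = [] ∧ m = 0
    · obtain ⟨hR, rfl⟩ := hstuck
      rw [Rs_eq (X.add (Wg 1)), Rs_eq (X.add (Wg 0)), R_add_W_succ, R_add_W_zero, hR]
      simp only [List.map_nil, List.nil_append, ra_add, ra_W]
      rw [if_neg (by simp)]
      simp only [if_true]
      have : Ls (X.add (Wg 0)) ≤ X.ra := (guaranteed_def hX).2.2.2 hR _ (Ls_add_W_mem X 0)
      calc (([X.add (Wg 0)].map Ls).minimum.untopD 0) ≤ Ls (X.add (Wg 0)) :=
            min_untop'_le 0 (by simp)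
        _ ≤ X.ra + 0 := by linarith
    · -- RHS is a min over a nonempty list
      have hRne : (X.add (Wg m)).R ≠ [] := by
        cases m with
        | zero =>
          rw [R_add_W_zero]
          simp only [ne_eq, List.map_eq_nil_iff]
          exact fun h => hstuck ⟨h, rfl⟩
        | succ k => rw [R_add_W_succ]; simp
      rw [Rs_eq (X.add (Wg (m+1))), Rs_eq (X.add (Wg m)), if_neg (by rw [R_add_W_succ]; simp),
        if_neg hRne]
      -- min attained on RHS
      have hmem := min_untop'_mem 0 (l := ((X.add (Wg m)).R).map Ls) (by simpa using hRne)
      obtain ⟨z, hz, heq⟩ := List.mem_map.1 hmem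
      rw [← heq]
      -- z is a right option of X + Wg m
      cases m with
      | zero =>
        rw [R_add_W_zero] at hz
        obtain ⟨r, hr, rfl⟩ := List.mem_map.1 hz
        have h1 : Ls (r.add (Wg 1)) ≤ Ls (r.add (Wg 0)) :=
          (ih _ (by have := sizeOf_lt_of_mem_R hr; omega) r 0 ((guaranteed_def hX).2.1 r hr) rfl).1
        refine le_trans (min_untop'_le 0 ?_) h1
        rw [R_add_W_succ]
        exact List.mem_map_of_mem (List.mem_append_left _ (List.mem_map_of_mem hr))
      | succ k =>
        rw [R_add_W_succ] at hz
        rcases List.mem_append.1 hz with hz' | hz'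
        · obtain ⟨r, hr, rfl⟩ := List.mem_map.1 hz'
          have h1 : Ls (r.add (Wg (k+1+1))) ≤ Ls (r.add (Wg (k+1))) :=
            (ih _ (by have := sizeOf_lt_of_mem_R hr; omega) r (k+1) ((guaranteed_def hX).2.1 r hr) rfl).1
          refine le_trans (min_untop'_le 0 ?_) h1
          rw [R_add_W_succ]
          exact List.mem_map_of_mem (List.mem_append_left _ (List.mem_map_of_mem hr))
        · simp only [List.mem_singleton] at hz'
          subst hz'
          have h1 : Ls (X.add (Wg (k+1))) ≤ Ls (X.add (Wg k)) :=
            (ih _ (by omega) X k hX rfl).1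
          refine le_trans (min_untop'_le 0 ?_) h1
          rw [R_add_W_succ]
          exact List.mem_map_of_mem (List.mem_append_right _ (by simp))
lemma Rs_le_opt {Z z : SG} (hz : z ∈ Z.R) : Rs Z ≤ Ls z := by
  rw [Rs_eq, if_neg (List.ne_nil_of_mem hz)]
  exact min_untop'_le 0 (List.mem_map_of_mem hz)

lemma opt_le_Ls {Z z : SG} (hz : z ∈ Z.L) : Rs z ≤ Ls Z := by
  rw [Ls_eq, if_neg (List.ne_nil_of_mem hz)]
  exact le_max_unbot' 0 (List.mem_map_of_mem hz)

lemma Ls_atom {Z : SG} (hz : Z.L = []) : Ls Z = Z.la := by rw [Ls_eq, if_pos hz]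
lemma Rs_atom {Z : SG} (hz : Z.R = []) : Rs Z = Z.ra := by rw [Rs_eq, if_pos hz]

lemma waiting_mem_R (X : SG) (n : ℕ) : (X.add (Wg n)) ∈ (X.add (Wg (n+1))).R := by
  rw [R_add_W_succ]
  exact List.mem_append_right _ (by simp)

lemma stops_W_antitone (X : SG) (hX : X.Guaranteed) {m m' : ℕ} (h : m ≤ m') :
    Ls (X.add (Wg m')) ≤ Ls (X.add (Wg m)) ∧ Rs (X.add (Wg m')) ≤ Rs (X.add (Wg m)) := by
  induction m' with
  | zero => have : m = 0 := by omega
            subst this; exact ⟨le_refl _, le_refl _⟩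
  | succ k ih =>
    rcases Nat.lt_or_ge m (k+1) with hlt | hge
    · have h1 := stops_W_antitone_step X k hX
      have h2 := ih (by omega)
      exact ⟨le_trans h1.1 h2.1, le_trans h1.2 h2.2⟩
    · have : m = k + 1 := by omega
      subst this; exact ⟨le_refl _, le_refl _⟩

lemma la_le_Rs_W {X : SG} (hX : X.Guaranteed) (hL : X.L = []) (m : ℕ) :
    X.la ≤ Rs (X.add (Wg m)) := (guaranteed_def hX).2.2.1 hL _ (Rs_add_W_mem X m)

lemma Ls_W_le_ra {X : SG} (hX : X.Guaranteed) (hR : X.R = []) (m : ℕ) :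
    Ls (X.add (Wg m)) ≤ X.ra := (guaranteed_def hX).2.2.2 hR _ (Ls_add_W_mem X m)

lemma Rs_W_le_ra {X : SG} (hX : X.Guaranteed) (hR : X.R = []) (m : ℕ) :
    Rs (X.add (Wg m)) ≤ X.ra := (guaranteed_def hX).2.2.2 hR _ (Rs_add_W_mem X m)

-- membership facts for options of (X.add Y).add (Wg n)
lemma memL_sum1 {X Y : SG} {l : SG} (hl : l ∈ X.L) (n : ℕ) :
    ((l.add Y).add (Wg n)) ∈ ((X.add Y).add (Wg n)).L := by
  rw [L_add_W, L_add]
  exact List.mem_map_of_mem (List.mem_append_left _ (List.mem_map_of_mem hl))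

lemma memL_sum2 {X Y : SG} {l : SG} (hl : l ∈ Y.L) (n : ℕ) :
    ((X.add l).add (Wg n)) ∈ ((X.add Y).add (Wg n)).L := by
  rw [L_add_W, L_add]
  exact List.mem_map_of_mem (List.mem_append_right _ (List.mem_map_of_mem hl))

lemma memR_W {X : SG} {r : SG} (hr : r ∈ X.R) (n : ℕ) :
    (r.add (Wg n)) ∈ (X.add (Wg n)).R := by
  cases n with
  | zero => rw [R_add_W_zero]; exact List.mem_map_of_mem hr
  | succ k => rw [R_add_W_succ]; exact List.mem_append_left _ (List.mem_map_of_mem hr)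
lemma memR_sum_iff {X Y : SG} {n : ℕ} {z : SG} :
    z ∈ ((X.add Y).add (Wg n)).R ↔
      (∃ r ∈ X.R, z = (r.add Y).add (Wg n)) ∨ (∃ r ∈ Y.R, z = (X.add r).add (Wg n)) ∨
      (∃ k, n = k + 1 ∧ z = (X.add Y).add (Wg k)) := by
  cases n with
  | zero =>
    rw [R_add_W_zero, R_add]
    simp only [List.map_append, List.map_map, List.mem_append, List.mem_map, Function.comp,
      eq_comm]
    constructor
    · rintro (⟨r, hr, rfl⟩ | ⟨r, hr, rfl⟩)
      · exact Or.inl ⟨r, hr, rfl⟩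
      · exact Or.inr (Or.inl ⟨r, hr, rfl⟩)
    · rintro (⟨r, hr, rfl⟩ | ⟨r, hr, rfl⟩ | ⟨k, hk, _⟩)
      · exact Or.inl ⟨r, hr, rfl⟩
      · exact Or.inr ⟨r, hr, rfl⟩
      · omega
  | succ m =>
    rw [R_add_W_succ, R_add]
    simp only [List.map_append, List.map_map, List.mem_append, List.mem_map, Function.comp,
      List.mem_singleton, eq_comm]
    constructor
    · rintro ((⟨r, hr, rfl⟩ | ⟨r, hr, rfl⟩) | rfl)
      · exact Or.inl ⟨r, hr, rfl⟩
      · exact Or.inr (Or.inl ⟨r, hr, rfl⟩)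
      · exact Or.inr (Or.inr ⟨m, rfl, rfl⟩)
    · rintro (⟨r, hr, rfl⟩ | ⟨r, hr, rfl⟩ | ⟨k, hk, rfl⟩)
      · exact Or.inl (Or.inl ⟨r, hr, rfl⟩)
      · exact Or.inl (Or.inr ⟨r, hr, rfl⟩)
      · right
        have : k = m := by omega
        rw [this]

lemma R_sum_ne_nil {X Y : SG} {n : ℕ} (hs : ¬(X.R = [] ∧ Y.R = [] ∧ n = 0)) :
    ((X.add Y).add (Wg n)).R ≠ [] := by
  cases n with
  | zero =>
    rw [R_add_W_zero, R_add]
    simp only [ne_eq, List.map_append, List.append_eq_nil_iff, List.map_eq_nil_iff]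
    rintro ⟨h1, h2⟩
    exact hs ⟨h1, h2, rfl⟩
  | succ m => rw [R_add_W_succ]; simp

lemma L_sum_ne_nil1 {X Y : SG} {n : ℕ} (hs : X.L ≠ []) :
    ((X.add Y).add (Wg n)).L ≠ [] := by
  rw [L_add_W, L_add]
  simp only [ne_eq, List.map_eq_nil_iff, List.append_eq_nil_iff, List.map_eq_nil_iff]
  rintro ⟨h1, _⟩; exact hs h1

lemma L_sum_ne_nil2 {X Y : SG} {n : ℕ} (hs : Y.L ≠ []) :
    ((X.add Y).add (Wg n)).L ≠ [] := by
  rw [L_add_W, L_add]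
  simp only [ne_eq, List.map_eq_nil_iff, List.append_eq_nil_iff, List.map_eq_nil_iff]
  rintro ⟨_, h2⟩; exact hs h2

lemma la_sum (X Y : SG) (n : ℕ) : ((X.add Y).add (Wg n)).la = X.la + Y.la := by
  rw [la_add, la_add, la_W, add_zero]

lemma ra_sum (X Y : SG) (n : ℕ) : ((X.add Y).add (Wg n)).ra = X.ra + Y.ra := by
  rw [ra_add, ra_add, ra_W, add_zero]

lemma L_sum_nil {X Y : SG} (hX : X.L = []) (hY : Y.L = []) (n : ℕ) :
    ((X.add Y).add (Wg n)).L = [] := by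
  rw [L_add_W, L_add, hX, hY]; simp

lemma R_sum_nil {X Y : SG} (hX : X.R = []) (hY : Y.R = []) :
    ((X.add Y).add (Wg 0)).R = [] := by
  rw [R_add_W_zero, R_add, hX, hY]; simp

/-- The lower-bound lemma: an extra left-atomic-side component `Y` all of whose
atoms are `≥ h` guarantees Left at least `h` more, given extra waiting moves. -/
lemma low (h : ℝ) : ∀ (X Y : SG) (n : ℕ), X.Guaranteed → (∀ s ∈ Y.atomList, h ≤ s) →
    Ls (X.add (Wg (n + Y.birthday))) + h ≤ Ls ((X.add Y).add (Wg n)) ∧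
    Rs (X.add (Wg (n + Y.birthday))) + h ≤ Rs ((X.add Y).add (Wg n)) := by
  intro X Y n hX hY
  induction' hm : sizeOf X + sizeOf Y + n using Nat.strong_induction_on with m ih
    generalizing X Y n
  subst hm
  have hYsub : ∀ y ∈ Y.R, ∀ s ∈ atomList y, h ≤ s :=
    fun y hy s hs => hY s (atomList_subset_R hy hs)
  constructor
  · -- Ls part
    by_cases hXL : X.L = []
    · by_cases hYL : Y.L = []
      · rw [Ls_atom (L_sum_nil hXL hYL n), la_sum, Ls_atom (by rw [L_add_W, hXL]; simp),
          la_add, la_W]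
        have := hY Y.la (la_mem_atomList hYL)
        linarith
      · -- Left moves in Y
        obtain ⟨y₀, hy₀⟩ := List.exists_mem_of_ne_nil _ hYL
        have hb : Rs (X.add (Wg (n + y₀.birthday))) + h ≤ Rs ((X.add y₀).add (Wg n)) :=
          (ih _ (by have := sizeOf_lt_of_mem_L hy₀; omega) X y₀ n hX
            (fun s hs => hY s (atomList_subset_L hy₀ hs)) rfl).2
        have h1 : X.la ≤ Rs (X.add (Wg (n + y₀.birthday))) := la_le_Rs_W hX hXL _
        have h2 : Rs ((X.add y₀).add (Wg n)) ≤ Ls ((X.add Y).add (Wg n)) :=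
          opt_le_Ls (memL_sum2 hy₀ n)
        rw [Ls_atom (by rw [L_add_W, hXL]; simp), la_add, la_W]
        linarith
    · -- RHS max attained
      have hne : (X.add (Wg (n + Y.birthday))).L ≠ [] := by
        rw [L_add_W]; simpa using hXL
      rw [Ls_eq (X.add (Wg (n + Y.birthday))), if_neg hne, L_add_W]
      have hmem := max_unbot'_mem 0
        (l := (X.L.map (fun x => x.add (Wg (n + Y.birthday)))).map Rs) (by simpa using hXL)
      obtain ⟨z, hz, heq⟩ := List.mem_map.1 hmem
      obtain ⟨l, hl, rfl⟩ := List.mem_map.1 hz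
      rw [← heq]
      have hb : Rs (l.add (Wg (n + Y.birthday))) + h ≤ Rs ((l.add Y).add (Wg n)) :=
        (ih _ (by have := sizeOf_lt_of_mem_L hl; omega) l Y n
          ((guaranteed_def hX).1 l hl) hY rfl).2
      exact le_trans hb (opt_le_Ls (memL_sum1 hl n))
  · -- Rs part
    by_cases hstuck : X.R = [] ∧ Y.R = [] ∧ n = 0
    · obtain ⟨hXR, hYR, rfl⟩ := hstuck
      rw [Rs_atom (R_sum_nil hXR hYR), ra_sum]
      have h1 : Rs (X.add (Wg (0 + Y.birthday))) ≤ X.ra := Rs_W_le_ra hX hXR _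
      have h2 : h ≤ Y.ra := hY Y.ra (ra_mem_atomList hYR)
      linarith
    · -- LHS min attained
      have hne := R_sum_ne_nil (X := X) (Y := Y) (n := n) hstuck
      rw [Rs_eq ((X.add Y).add (Wg n)), if_neg hne]
      have hmem := min_untop'_mem 0 (l := (((X.add Y).add (Wg n)).R).map Ls)
        (by simpa using hne)
      obtain ⟨z, hz, heq⟩ := List.mem_map.1 hmem
      rw [← heq]
      rcases memR_sum_iff.1 hz with ⟨r, hr, rfl⟩ | ⟨r, hr, rfl⟩ | ⟨k, rfl, rfl⟩
      · -- Right moved in X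
        have hb : Ls (r.add (Wg (n + Y.birthday))) + h ≤ Ls ((r.add Y).add (Wg n)) :=
          (ih _ (by have := sizeOf_lt_of_mem_R hr; omega) r Y n
            ((guaranteed_def hX).2.1 r hr) hY rfl).1
        have h1 : Rs (X.add (Wg (n + Y.birthday))) ≤ Ls (r.add (Wg (n + Y.birthday))) :=
          Rs_le_opt (memR_W hr _)
        linarith
      · -- Right moved in Y
        have hb : Ls (X.add (Wg (n + r.birthday))) + h ≤ Ls ((X.add r).add (Wg n)) :=
          (ih _ (by have := sizeOf_lt_of_mem_R hr; omega) X r n hX (hYsub r hr) rfl).1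
        have hbd : r.birthday < Y.birthday := birthday_lt_of_mem_R hr
        have h1 : Rs (X.add (Wg (n + Y.birthday))) ≤ Ls (X.add (Wg (n + Y.birthday - 1))) := by
          have : n + Y.birthday = (n + Y.birthday - 1) + 1 := by omega
          rw [this]
          exact Rs_le_opt (waiting_mem_R X _)
        have h2 : Ls (X.add (Wg (n + Y.birthday - 1))) ≤ Ls (X.add (Wg (n + r.birthday))) :=
          (stops_W_antitone X hX (by omega)).1
        linarith
      · -- Right waited
        have hb : Ls (X.add (Wg (k + Y.birthday))) + h ≤ Ls ((X.add Y).add (Wg k)) :=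
          (ih _ (by omega) X Y k hX hY rfl).1
        have h1 : Rs (X.add (Wg (k + 1 + Y.birthday))) ≤ Ls (X.add (Wg (k + Y.birthday))) := by
          have : k + 1 + Y.birthday = (k + Y.birthday) + 1 := by omega
          rw [this]
          exact Rs_le_opt (waiting_mem_R X _)
        linarith
lemma memL_sum_iff_atomic {X H : SG} (hHL : H.L = []) {n : ℕ} {z : SG} :
    z ∈ ((X.add H).add (Wg n)).L ↔ ∃ l ∈ X.L, z = (l.add H).add (Wg n) := by
  rw [L_add_W, L_add, hHL]
  simp only [List.map_nil, List.append_nil, List.map_map, List.mem_map, Function.comp, eq_comm]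

/-- If all atoms of `X` are at most `c` and Right has enough waiting moves,
Right can hold the total below `c + H.la` by waiting forever. -/
lemma up_end (c : ℝ) (H : SG) (hHL : H.L = []) :
    ∀ (X : SG) (m : ℕ), (∀ s ∈ X.atomList, s ≤ c) →
    (X.birthday ≤ m → Ls ((X.add H).add (Wg m)) ≤ c + H.la) ∧
    (X.birthday + 1 ≤ m → Rs ((X.add H).add (Wg m)) ≤ c + H.la) := by
  intro X m hc
  induction' hn : sizeOf X + m using Nat.strong_induction_on with n ih generalizing X m
  subst hn
  constructor
  · intro hm
    by_cases hXL : X.L = []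
    · rw [Ls_atom (L_sum_nil hXL hHL m), la_sum]
      have := hc X.la (la_mem_atomList hXL)
      linarith
    · have hne : ((X.add H).add (Wg m)).L ≠ [] := L_sum_ne_nil1 hXL
      rw [Ls_eq, if_neg hne]
      have hmem := max_unbot'_mem 0 (l := (((X.add H).add (Wg m)).L).map Rs) (by simpa using hne)
      obtain ⟨z, hz, heq⟩ := List.mem_map.1 hmem
      obtain ⟨l, hl, rfl⟩ := (memL_sum_iff_atomic hHL).1 hz
      rw [← heq]
      exact (ih _ (by have := sizeOf_lt_of_mem_L hl; omega) l m
        (fun s hs => hc s (atomList_subset_L hl hs)) rfl).2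
        (by have := birthday_lt_of_mem_L hl; omega)
  · intro hm
    obtain ⟨m', rfl⟩ : ∃ m', m = m' + 1 := ⟨m - 1, by omega⟩
    have h1 : Rs ((X.add H).add (Wg (m'+1))) ≤ Ls ((X.add H).add (Wg m')) :=
      Rs_le_opt (waiting_mem_R _ _)
    exact le_trans h1 ((ih _ (by omega) X m' hc rfl).1 (by omega))

/-- The upper-bound lemma: Right mirrors his strategy from `X + Wg n`, never
moving in the left-atomic `H` and using `k` extra waiting moves. -/
lemma up2 (H : SG) (hHL : H.L = []) :
    ∀ (X : SG) (n k : ℕ), X.Guaranteed →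
    (X.birthday ≤ k → Ls ((X.add H).add (Wg (n + k))) ≤ Ls (X.add (Wg n)) + H.la) ∧
    (X.birthday + 1 ≤ k → Rs ((X.add H).add (Wg (n + k))) ≤ Rs (X.add (Wg n)) + H.la) := by
  intro X n k hX
  induction' hm : sizeOf X + n using Nat.strong_induction_on with m ih generalizing X n
  subst hm
  constructor
  · intro hk
    by_cases hXL : X.L = []
    · rw [Ls_atom (L_sum_nil hXL hHL _), la_sum, Ls_atom (by rw [L_add_W, hXL]; simp),
        la_add, la_W]
      linarith
    · have hne : ((X.add H).add (Wg (n + k))).L ≠ [] := L_sum_ne_nil1 hXL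
      rw [Ls_eq, if_neg hne]
      have hmem := max_unbot'_mem 0 (l := (((X.add H).add (Wg (n + k))).L).map Rs)
        (by simpa using hne)
      obtain ⟨z, hz, heq⟩ := List.mem_map.1 hmem
      obtain ⟨l, hl, rfl⟩ := (memL_sum_iff_atomic hHL).1 hz
      rw [← heq]
      have hb : Rs ((l.add H).add (Wg (n + k))) ≤ Rs (l.add (Wg n)) + H.la :=
        (ih _ (by have := sizeOf_lt_of_mem_L hl; omega) l n ((guaranteed_def hX).1 l hl) rfl).2
          (by have := birthday_lt_of_mem_L hl; omega)
      have h2 : Rs (l.add (Wg n)) ≤ Ls (X.add (Wg n)) := by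
        refine opt_le_Ls ?_
        rw [L_add_W]
        exact List.mem_map_of_mem hl
      linarith
  · intro hk
    by_cases hstuck : X.R = [] ∧ n = 0
    · obtain ⟨hXR, rfl⟩ := hstuck
      have hra : Rs (X.add (Wg 0)) = X.ra + 0 := by
        rw [Rs_atom (Z := X.add (Wg 0)) (by rw [R_add_W_zero, hXR]; simp), ra_add, ra_W]
      rw [hra]
      have := (up_end X.ra H hHL X (0 + k) ((guaranteed_def hX).2.2.2 hXR)).2 (by omega)
      linarith
    · have hne : (X.add (Wg n)).R ≠ [] := by
        cases n with
        | zero =>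
          rw [R_add_W_zero]
          simp only [ne_eq, List.map_eq_nil_iff]
          exact fun hh => hstuck ⟨hh, rfl⟩
        | succ j => rw [R_add_W_succ]; simp
      rw [Rs_eq (X.add (Wg n)), if_neg hne]
      have hmem := min_untop'_mem 0 (l := ((X.add (Wg n)).R).map Ls) (by simpa using hne)
      obtain ⟨z, hz, heq⟩ := List.mem_map.1 hmem
      rw [← heq]
      have hz' : (∃ r ∈ X.R, z = r.add (Wg n)) ∨ (∃ j, n = j + 1 ∧ z = X.add (Wg j)) := by
        cases n with
        | zero =>
          rw [R_add_W_zero] at hz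
          obtain ⟨r, hr, rfl⟩ := List.mem_map.1 hz
          exact Or.inl ⟨r, hr, rfl⟩
        | succ j =>
          rw [R_add_W_succ] at hz
          rcases List.mem_append.1 hz with hz1 | hz1
          · obtain ⟨r, hr, rfl⟩ := List.mem_map.1 hz1
            exact Or.inl ⟨r, hr, rfl⟩
          · simp only [List.mem_singleton] at hz1
            exact Or.inr ⟨j, rfl, hz1⟩
      rcases hz' with ⟨r, hr, rfl⟩ | ⟨j, rfl, rfl⟩
      · have h1 : Rs ((X.add H).add (Wg (n + k))) ≤ Ls ((r.add H).add (Wg (n + k))) :=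
          Rs_le_opt (memR_sum_iff.2 (Or.inl ⟨r, hr, rfl⟩))
        have hb : Ls ((r.add H).add (Wg (n + k))) ≤ Ls (r.add (Wg n)) + H.la :=
          (ih _ (by have := sizeOf_lt_of_mem_R hr; omega) r n ((guaranteed_def hX).2.1 r hr) rfl).1
            (by have := birthday_lt_of_mem_R hr; omega)
        linarith
      · have h1 : Rs ((X.add H).add (Wg (j + 1 + k))) ≤ Ls ((X.add H).add (Wg (j + k))) := by
          have : j + 1 + k = (j + k) + 1 := by omega
          rw [this]
          exact Rs_le_opt (waiting_mem_R _ _)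
        have hb : Ls ((X.add H).add (Wg (j + k))) ≤ Ls (X.add (Wg j)) + H.la :=
          (ih _ (by omega) X j hX rfl).1 (by omega)
        linarith
lemma stops_add_W0 : ∀ X : SG, Ls (X.add (Wg 0)) = Ls X ∧ Rs (X.add (Wg 0)) = Rs X := by
  intro X
  induction' hn : sizeOf X using Nat.strong_induction_on with n ih generalizing X
  subst hn
  constructor
  · rw [Ls_eq (X.add (Wg 0)), Ls_eq X, L_add_W]
    by_cases h : X.L = []
    · rw [if_pos (by simp [h]), if_pos h, la_add, la_W, add_zero]
    · rw [if_neg (by simpa using h), if_neg h, List.map_map]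
      have heq : List.map (Rs ∘ fun x => x.add (Wg 0)) X.L = List.map Rs X.L :=
        List.map_congr_left fun l hl => (ih _ (sizeOf_lt_of_mem_L hl) l rfl).2
      rw [heq]
  · rw [Rs_eq (X.add (Wg 0)), Rs_eq X, R_add_W_zero]
    by_cases h : X.R = []
    · rw [if_pos (by simp [h]), if_pos h, ra_add, ra_W, add_zero]
    · rw [if_neg (by simpa using h), if_neg h, List.map_map]
      have heq : List.map (Ls ∘ fun x => x.add (Wg 0)) X.R = List.map Ls X.R :=
        List.map_congr_left fun r hr => (ih _ (sizeOf_lt_of_mem_R hr) r rfl).1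
      rw [heq]

lemma lsU_eq (G : SG) : G.lsU = ⨅ n : ℕ, Ls (G.add (Wg n)) := rfl

lemma bdd_lsU (G : SG) : BddBelow (Set.range fun n : ℕ => Ls (G.add (Wg n))) := by
  refine ⟨G.minAtom, ?_⟩
  rintro x ⟨n, rfl⟩
  exact min_untop'_le 0 (Ls_add_W_mem G n)
theorem leftAtomic_passAllowed_aux (G H : SG) (hG : G.Guaranteed) (hH : H.Guaranteed)
    (hatom : H.L = []) :
    Ls (G.add H) ≥ (G.add H).lsU ∧ (G.add H).lsU = G.lsU + H.la := by
  have hYatoms : ∀ s ∈ H.atomList, H.la ≤ s := (guaranteed_def hH).2.2.1 hatom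
  have key2 : (G.add H).lsU = G.lsU + H.la := by
    apply le_antisymm
    · have : ∀ n : ℕ, (G.add H).lsU - H.la ≤ Ls (G.add (Wg n)) := by
        intro n
        have h1 : (G.add H).lsU ≤ Ls ((G.add H).add (Wg (n + (G.birthday + 1)))) := by
          rw [lsU_eq]
          exact ciInf_le (bdd_lsU _) _
        have h2 := (up2 H hatom G n (G.birthday + 1) hG).1 (by omega)
        linarith
      have := le_ciInf this
      rw [lsU_eq G]
      linarith
    · rw [lsU_eq (G.add H)]
      refine le_ciInf fun n => ?_
      have h1 : G.lsU ≤ Ls (G.add (Wg (n + H.birthday))) := by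
        rw [lsU_eq]
        exact ciInf_le (bdd_lsU _) _
      have h2 := (low H.la G H n hG hYatoms).1
      linarith
  refine ⟨?_, key2⟩
  have h1 : (G.add H).lsU ≤ Ls ((G.add H).add (Wg 0)) := by
    rw [lsU_eq]
    exact ciInf_le (bdd_lsU _) _
  rw [(stops_add_W0 (G.add H)).1] at h1
  exact h1

/-- If `H = ⟨∅^h | H^R⟩` is left-atomic then
`Ls(G+H) ≥ L̲s(G+H) = L̲s(G) + h`. -/
theorem leftAtomic_passAllowed (G H : SG) (hG : G.Guaranteed) (hH : H.Guaranteed)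
    (hatom : H.L = []) :
    Ls (G.add H) ≥ (G.add H).lsU ∧ (G.add H).lsU = G.lsU + H.la := by
  exact leftAtomic_passAllowed_aux G H hG hH hatom

end SG
end

section
/- Linking criterion: for guaranteed scoring games G and H, G is linked to H (there exists guaranteed T with Ls(G+T) < 0 < Rs(H+T)) if and only if no Left option G^L of G satisfies G^L ≽ H and no Right option H^R of H satisfies H^R ≼ G. -/
namespace SG

/-! ### Auxiliary lemmas -/

@[simp] theorem la_mk (a b : ℝ) (ls rs : List SG) : (mk a b ls rs).la = a := rfl
@[simp] theorem ra_mk (a b : ℝ) (ls rs : List SG) : (mk a b ls rs).ra = b := rfl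
@[simp] theorem L_mk (a b : ℝ) (ls rs : List SG) : (mk a b ls rs).L = ls := rfl
@[simp] theorem R_mk (a b : ℝ) (ls rs : List SG) : (mk a b ls rs).R = rs := rfl

@[simp] theorem la_num (c : ℝ) : (num c).la = c := rfl
@[simp] theorem ra_num (c : ℝ) : (num c).ra = c := rfl
@[simp] theorem L_num (c : ℝ) : (num c).L = [] := rfl
@[simp] theorem R_num (c : ℝ) : (num c).R = [] := rfl

theorem sizeOf_lt_of_memL {G x : SG} (h : x ∈ G.L) : sizeOf x < sizeOf G := by
  cases G with | mk a b ls rs =>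
  have h' : x ∈ ls := h
  have := sizeOf_lt_of_mem h'
  simp only [SG.mk.sizeOf_spec]; omega

theorem sizeOf_lt_of_memR {G x : SG} (h : x ∈ G.R) : sizeOf x < sizeOf G := by
  cases G with | mk a b ls rs =>
  have h' : x ∈ rs := h
  have := sizeOf_lt_of_mem h'
  simp only [SG.mk.sizeOf_spec]; omega

theorem sizeOf_pos (G : SG) : 1 ≤ sizeOf G := by
  cases G with | mk a b ls rs => simp only [SG.mk.sizeOf_spec]; omega

theorem add_eq (G H : SG) : G.add H =
    mk (G.la + H.la) (G.ra + H.ra)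
      (G.L.map (fun x => x.add H) ++ H.L.map (fun x => G.add x))
      (G.R.map (fun x => x.add H) ++ H.R.map (fun x => G.add x)) := by
  cases G with | mk a1 b1 L1 R1 =>
  cases H with | mk a2 b2 L2 R2 =>
  rw [add]
  simp [List.attach_map_val]


@[simp] theorem la_add_s16 (G H : SG) : (G.add H).la = G.la + H.la := by rw [add_eq]; rfl
@[simp] theorem ra_add_s16 (G H : SG) : (G.add H).ra = G.ra + H.ra := by rw [add_eq]; rfl
theorem L_add_s16 (G H : SG) :
    (G.add H).L = G.L.map (fun x => x.add H) ++ H.L.map (fun x => G.add x) := by rw [add_eq]; rfl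
theorem R_add_s16 (G H : SG) :
    (G.add H).R = G.R.map (fun x => x.add H) ++ H.R.map (fun x => G.add x) := by rw [add_eq]; rfl

theorem L_add_eq_nil {G H : SG} : (G.add H).L = [] ↔ G.L = [] ∧ H.L = [] := by
  rw [L_add_s16]; simp

theorem R_add_eq_nil {G H : SG} : (G.add H).R = [] ↔ G.R = [] ∧ H.R = [] := by
  rw [R_add_s16]; simp

theorem addL_memL {G H x : SG} (h : x ∈ G.L) : x.add H ∈ (G.add H).L := by
  rw [L_add_s16]; exact List.mem_append_left _ (List.mem_map_of_mem h)

theorem addL_memR {G H x : SG} (h : x ∈ H.L) : G.add x ∈ (G.add H).L := by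
  rw [L_add_s16]; exact List.mem_append_right _ (List.mem_map_of_mem h)

theorem addR_memL {G H x : SG} (h : x ∈ G.R) : x.add H ∈ (G.add H).R := by
  rw [R_add_s16]; exact List.mem_append_left _ (List.mem_map_of_mem h)

theorem addR_memR {G H x : SG} (h : x ∈ H.R) : G.add x ∈ (G.add H).R := by
  rw [R_add_s16]; exact List.mem_append_right _ (List.mem_map_of_mem h)

theorem mem_addL {G H x : SG} (h : x ∈ (G.add H).L) :
    (∃ g ∈ G.L, x = g.add H) ∨ (∃ k ∈ H.L, x = G.add k) := by
  rw [L_add_s16] at h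
  rcases List.mem_append.1 h with h | h
  · obtain ⟨g, hg, rfl⟩ := List.mem_map.1 h; exact Or.inl ⟨g, hg, rfl⟩
  · obtain ⟨k, hk, rfl⟩ := List.mem_map.1 h; exact Or.inr ⟨k, hk, rfl⟩

theorem mem_addR {G H x : SG} (h : x ∈ (G.add H).R) :
    (∃ g ∈ G.R, x = g.add H) ∨ (∃ k ∈ H.R, x = G.add k) := by
  rw [R_add_s16] at h
  rcases List.mem_append.1 h with h | h
  · obtain ⟨g, hg, rfl⟩ := List.mem_map.1 h; exact Or.inl ⟨g, hg, rfl⟩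
  · obtain ⟨k, hk, rfl⟩ := List.mem_map.1 h; exact Or.inr ⟨k, hk, rfl⟩

theorem Ls_eq_s16 (a b : ℝ) (ls rs : List SG) :
    Ls (mk a b ls rs) = if ls = [] then a else ((ls.map Rs).maximum.unbotD 0) := by
  rw [Ls, stops]
  simp only [List.attach_map_val, List.pmap_eq_map, List.isEmpty_iff]
  rw [← List.attach_map_val (f := Rs)]; rfl

theorem Rs_eq_s16 (a b : ℝ) (ls rs : List SG) :
    Rs (mk a b ls rs) = if rs = [] then b else ((rs.map Ls).minimum.untopD 0) := by
  rw [Rs, stops]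
  simp only [List.attach_map_val, List.pmap_eq_map, List.isEmpty_iff]
  rw [← List.attach_map_val (f := Ls)]; rfl

theorem atomList_eq_s16 (a b : ℝ) (ls rs : List SG) :
    atomList (mk a b ls rs) =
      (if ls = [] then [a] else (ls.map atomList).flatten)
      ++ (if rs = [] then [b] else (rs.map atomList).flatten) := by
  rw [atomList]; simp only [List.attach_map_val, List.pmap_eq_map, List.isEmpty_iff]

theorem Guaranteed_iff (a b : ℝ) (ls rs : List SG) :
    Guaranteed (mk a b ls rs) ↔
    (∀ x ∈ ls, Guaranteed x) ∧ (∀ x ∈ rs, Guaranteed x) ∧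
    (ls = [] → ∀ s ∈ (mk a b ls rs).atomList, a ≤ s) ∧
    (rs = [] → ∀ s ∈ (mk a b ls rs).atomList, s ≤ b) := by
  rw [Guaranteed]

theorem le_maximum_unbot' {l : List ℝ} {x : ℝ} (h : x ∈ l) : x ≤ l.maximum.unbotD 0 := by
  cases hm : l.maximum with
  | bot => exact absurd hm (List.maximum_ne_bot_of_ne_nil (List.ne_nil_of_mem h))
  | coe m => simpa using List.le_maximum_of_mem h hm

theorem maximum_unbot'_mem {l : List ℝ} (h : l ≠ []) : l.maximum.unbotD 0 ∈ l := by
  cases hm : l.maximum with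
  | bot => exact absurd hm (List.maximum_ne_bot_of_ne_nil h)
  | coe m => simpa using List.maximum_mem hm

theorem minimum_untop'_le {l : List ℝ} {x : ℝ} (h : x ∈ l) : l.minimum.untopD 0 ≤ x := by
  cases hm : l.minimum with
  | top => exact absurd hm (List.minimum_ne_top_of_ne_nil (List.ne_nil_of_mem h))
  | coe m => simpa using List.minimum_le_of_mem h hm

theorem minimum_untop'_mem {l : List ℝ} (h : l ≠ []) : l.minimum.untopD 0 ∈ l := by
  cases hm : l.minimum with
  | top => exact absurd hm (List.minimum_ne_top_of_ne_nil h)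
  | coe m => simpa using List.minimum_mem hm

theorem Ls_of_L_nil {G : SG} (h : G.L = []) : Ls G = G.la := by
  cases G with | mk a b ls rs =>
  have h' : ls = [] := h
  rw [Ls_eq_s16, if_pos h', la_mk]

theorem Rs_of_R_nil {G : SG} (h : G.R = []) : Rs G = G.ra := by
  cases G with | mk a b ls rs =>
  have h' : rs = [] := h
  rw [Rs_eq_s16, if_pos h', ra_mk]

theorem Rs_le_Ls_of_memL {G x : SG} (h : x ∈ G.L) : Rs x ≤ Ls G := by
  cases G with | mk a b ls rs =>
  have h' : x ∈ ls := h
  rw [Ls_eq_s16, if_neg (List.ne_nil_of_mem h')]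
  exact le_maximum_unbot' (List.mem_map_of_mem h')

theorem Rs_le_Ls_of_memR {G x : SG} (h : x ∈ G.R) : Rs G ≤ Ls x := by
  cases G with | mk a b ls rs =>
  have h' : x ∈ rs := h
  rw [Rs_eq_s16, if_neg (List.ne_nil_of_mem h')]
  exact minimum_untop'_le (List.mem_map_of_mem h')

theorem exists_Ls_eq {G : SG} (h : G.L ≠ []) : ∃ x ∈ G.L, Ls G = Rs x := by
  cases G with | mk a b ls rs =>
  have h' : ls ≠ [] := h
  rw [Ls_eq_s16, if_neg h']
  have hm := maximum_unbot'_mem (l := ls.map Rs) (by simpa using h')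
  obtain ⟨x, hx, heq⟩ := List.mem_map.1 hm
  exact ⟨x, hx, heq.symm⟩

theorem exists_Rs_eq {G : SG} (h : G.R ≠ []) : ∃ x ∈ G.R, Rs G = Ls x := by
  cases G with | mk a b ls rs =>
  have h' : rs ≠ [] := h
  rw [Rs_eq_s16, if_neg h']
  have hm := minimum_untop'_mem (l := rs.map Ls) (by simpa using h')
  obtain ⟨x, hx, heq⟩ := List.mem_map.1 hm
  exact ⟨x, hx, heq.symm⟩

theorem mem_atomList_la {G : SG} (h : G.L = []) : G.la ∈ G.atomList := by
  cases G with | mk a b ls rs =>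
  have h' : ls = [] := h
  rw [atomList_eq_s16, if_pos h']
  simp

theorem mem_atomList_ra {G : SG} (h : G.R = []) : G.ra ∈ G.atomList := by
  cases G with | mk a b ls rs =>
  have h' : rs = [] := h
  rw [atomList_eq_s16, if_pos h']
  simp

theorem atomList_subL {G x : SG} (hx : x ∈ G.L) {s : ℝ} (hs : s ∈ x.atomList) :
    s ∈ G.atomList := by
  cases G with | mk a b ls rs =>
  have hx' : x ∈ ls := hx
  rw [atomList_eq_s16, if_neg (List.ne_nil_of_mem hx')]
  exact List.mem_append_left _ (List.mem_flatten.2 ⟨x.atomList, List.mem_map_of_mem hx', hs⟩)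

theorem atomList_subR {G x : SG} (hx : x ∈ G.R) {s : ℝ} (hs : s ∈ x.atomList) :
    s ∈ G.atomList := by
  cases G with | mk a b ls rs =>
  have hx' : x ∈ rs := hx
  rw [atomList_eq_s16, if_neg (List.ne_nil_of_mem hx')]
  exact List.mem_append_right _ (List.mem_flatten.2 ⟨x.atomList, List.mem_map_of_mem hx', hs⟩)

theorem le_foldr_max {x : ℝ} : ∀ {l : List ℝ} (d : ℝ), x ∈ l → x ≤ l.foldr max d := by
  intro l
  induction l with
  | nil => intro d h; simp at h
  | cons a t ih =>
    intro d h
    rcases List.mem_cons.1 h with h | h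
    · subst h; exact le_max_left _ _
    · exact le_trans (ih d h) (le_max_right _ _)

theorem d_le_foldr_max (d : ℝ) : ∀ (l : List ℝ), d ≤ l.foldr max d := by
  intro l
  induction l with
  | nil => simp
  | cons a t ih => exact le_trans ih (le_max_right _ _)

theorem foldr_min_le {x : ℝ} : ∀ {l : List ℝ} (d : ℝ), x ∈ l → l.foldr min d ≤ x := by
  intro l
  induction l with
  | nil => intro d h; simp at h
  | cons a t ih =>
    intro d h
    rcases List.mem_cons.1 h with h | h
    · subst h; exact min_le_left _ _
    · exact le_trans (min_le_right _ _) (ih d h)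

theorem foldr_min_le_d (d : ℝ) : ∀ (l : List ℝ), l.foldr min d ≤ d := by
  intro l
  induction l with
  | nil => simp
  | cons a t ih => exact le_trans (min_le_right _ _) ih

theorem stops_le_aux :
    ∀ (n : ℕ) (G : SG), sizeOf G ≤ n → ∀ U : ℝ,
      (∀ s ∈ G.atomList, s ≤ U) → Ls G ≤ U ∧ Rs G ≤ U := by
  intro n
  induction n with
  | zero =>
    intro G hG
    have := sizeOf_pos G; omega
  | succ n ih =>
    intro G hsz U hU
    constructor
    · rcases eq_or_ne G.L [] with h | h
      · rw [Ls_of_L_nil h]; exact hU _ (mem_atomList_la h)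
      · obtain ⟨x, hx, hLs⟩ := exists_Ls_eq h
        rw [hLs]
        have hs := sizeOf_lt_of_memL hx
        exact (ih x (by omega) U (fun s hs' => hU s (atomList_subL hx hs'))).2
    · rcases eq_or_ne G.R [] with h | h
      · rw [Rs_of_R_nil h]; exact hU _ (mem_atomList_ra h)
      · obtain ⟨x, hx, hRs⟩ := exists_Rs_eq h
        rw [hRs]
        have hs := sizeOf_lt_of_memR hx
        exact (ih x (by omega) U (fun s hs' => hU s (atomList_subR hx hs'))).1

theorem stops_le (G : SG) (U : ℝ) (hU : ∀ s ∈ G.atomList, s ≤ U) : Ls G ≤ U ∧ Rs G ≤ U :=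
  stops_le_aux (sizeOf G) G le_rfl U hU

theorem le_stops_aux :
    ∀ (n : ℕ) (G : SG), sizeOf G ≤ n → ∀ U : ℝ,
      (∀ s ∈ G.atomList, U ≤ s) → U ≤ Ls G ∧ U ≤ Rs G := by
  intro n
  induction n with
  | zero =>
    intro G hG
    have := sizeOf_pos G; omega
  | succ n ih =>
    intro G hsz U hU
    constructor
    · rcases eq_or_ne G.L [] with h | h
      · rw [Ls_of_L_nil h]; exact hU _ (mem_atomList_la h)
      · obtain ⟨x, hx, hLs⟩ := exists_Ls_eq h
        rw [hLs]
        have hs := sizeOf_lt_of_memL hx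
        exact (ih x (by omega) U (fun s hs' => hU s (atomList_subL hx hs'))).2
    · rcases eq_or_ne G.R [] with h | h
      · rw [Rs_of_R_nil h]; exact hU _ (mem_atomList_ra h)
      · obtain ⟨x, hx, hRs⟩ := exists_Rs_eq h
        rw [hRs]
        have hs := sizeOf_lt_of_memR hx
        exact (ih x (by omega) U (fun s hs' => hU s (atomList_subR hx hs'))).1

theorem le_stops (G : SG) (U : ℝ) (hU : ∀ s ∈ G.atomList, U ≤ s) : U ≤ Ls G ∧ U ≤ Rs G :=
  le_stops_aux (sizeOf G) G le_rfl U hU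

theorem atomList_add_aux :
    ∀ (n : ℕ) (G H : SG), sizeOf G + sizeOf H ≤ n →
      ∀ s ∈ (G.add H).atomList, ∃ u ∈ G.atomList, ∃ v ∈ H.atomList, s = u + v := by
  intro n
  induction n with
  | zero =>
    intro G H hsz
    have := sizeOf_pos G; have := sizeOf_pos H; omega
  | succ n ih =>
    intro G H hsz s hs
    rw [add_eq, atomList_eq_s16] at hs
    rcases List.mem_append.1 hs with hs | hs
    · by_cases hL : G.L.map (fun x => x.add H) ++ H.L.map (fun x => G.add x) = []
      · rw [if_pos hL] at hs
        simp only [List.mem_singleton] at hs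
        subst hs
        simp only [List.append_eq_nil_iff, List.map_eq_nil_iff] at hL
        exact ⟨G.la, mem_atomList_la hL.1, H.la, mem_atomList_la hL.2, rfl⟩
      · rw [if_neg hL] at hs
        obtain ⟨l', hl', hsl⟩ := List.mem_flatten.1 hs
        obtain ⟨x, hx, rfl⟩ := List.mem_map.1 hl'
        rcases List.mem_append.1 hx with hx | hx
        · obtain ⟨g, hg, rfl⟩ := List.mem_map.1 hx
          have hsg := sizeOf_lt_of_memL hg
          obtain ⟨u, hu, v, hv, rfl⟩ := ih g H (by omega) s hsl
          exact ⟨u, atomList_subL hg hu, v, hv, rfl⟩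
        · obtain ⟨k, hk, rfl⟩ := List.mem_map.1 hx
          have hsk := sizeOf_lt_of_memL hk
          obtain ⟨u, hu, v, hv, rfl⟩ := ih G k (by omega) s hsl
          exact ⟨u, hu, v, atomList_subL hk hv, rfl⟩
    · by_cases hR : G.R.map (fun x => x.add H) ++ H.R.map (fun x => G.add x) = []
      · rw [if_pos hR] at hs
        simp only [List.mem_singleton] at hs
        subst hs
        simp only [List.append_eq_nil_iff, List.map_eq_nil_iff] at hR
        exact ⟨G.ra, mem_atomList_ra hR.1, H.ra, mem_atomList_ra hR.2, rfl⟩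
      · rw [if_neg hR] at hs
        obtain ⟨l', hl', hsl⟩ := List.mem_flatten.1 hs
        obtain ⟨x, hx, rfl⟩ := List.mem_map.1 hl'
        rcases List.mem_append.1 hx with hx | hx
        · obtain ⟨g, hg, rfl⟩ := List.mem_map.1 hx
          have hsg := sizeOf_lt_of_memR hg
          obtain ⟨u, hu, v, hv, rfl⟩ := ih g H (by omega) s hsl
          exact ⟨u, atomList_subR hg hu, v, hv, rfl⟩
        · obtain ⟨k, hk, rfl⟩ := List.mem_map.1 hx
          have hsk := sizeOf_lt_of_memR hk
          obtain ⟨u, hu, v, hv, rfl⟩ := ih G k (by omega) s hsl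
          exact ⟨u, hu, v, atomList_subR hk hv, rfl⟩

theorem atomList_add {G H : SG} {s : ℝ} (hs : s ∈ (G.add H).atomList) :
    ∃ u ∈ G.atomList, ∃ v ∈ H.atomList, s = u + v :=
  atomList_add_aux (sizeOf G + sizeOf H) G H le_rfl s hs

theorem Guaranteed.memL {G x : SG} (hG : G.Guaranteed) (h : x ∈ G.L) : x.Guaranteed := by
  cases G with | mk a b ls rs =>
  exact ((Guaranteed_iff a b ls rs).1 hG).1 x h

theorem Guaranteed.memR {G x : SG} (hG : G.Guaranteed) (h : x ∈ G.R) : x.Guaranteed := by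
  cases G with | mk a b ls rs =>
  exact ((Guaranteed_iff a b ls rs).1 hG).2.1 x h

theorem Guaranteed_la {G : SG} (hG : G.Guaranteed) (h : G.L = []) :
    ∀ s ∈ G.atomList, G.la ≤ s := by
  cases G with | mk a b ls rs =>
  exact ((Guaranteed_iff a b ls rs).1 hG).2.2.1 h

theorem Guaranteed_ra {G : SG} (hG : G.Guaranteed) (h : G.R = []) :
    ∀ s ∈ G.atomList, s ≤ G.ra := by
  cases G with | mk a b ls rs =>
  exact ((Guaranteed_iff a b ls rs).1 hG).2.2.2 h

theorem Guaranteed_mk' {a b : ℝ} {ls rs : List SG}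
    (h1 : ∀ x ∈ ls, Guaranteed x) (h2 : ∀ x ∈ rs, Guaranteed x)
    (h3 : ls = [] → ∀ s ∈ (mk a b ls rs).atomList, a ≤ s)
    (h4 : rs = [] → ∀ s ∈ (mk a b ls rs).atomList, s ≤ b) :
    Guaranteed (mk a b ls rs) :=
  (Guaranteed_iff a b ls rs).2 ⟨h1, h2, h3, h4⟩

theorem Guaranteed_num (c : ℝ) : (num c).Guaranteed := by
  refine Guaranteed_mk' (by simp) (by simp) ?_ ?_ <;>
  · intro _ s hs
    rw [atomList_eq_s16] at hs
    simp at hs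
    simp [hs]

theorem Guaranteed_add_aux :
    ∀ (n : ℕ) (G H : SG), sizeOf G + sizeOf H ≤ n →
      G.Guaranteed → H.Guaranteed → (G.add H).Guaranteed := by
  intro n
  induction n with
  | zero =>
    intro G H hsz
    have := sizeOf_pos G; have := sizeOf_pos H; omega
  | succ n ih =>
    intro G H hsz hG hH
    rw [add_eq]
    refine Guaranteed_mk' ?_ ?_ ?_ ?_
    · intro x hx
      rcases List.mem_append.1 hx with hx | hx
      · obtain ⟨g, hg, rfl⟩ := List.mem_map.1 hx
        have := sizeOf_lt_of_memL hg
        exact ih g H (by omega) (hG.memL hg) hH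
      · obtain ⟨k, hk, rfl⟩ := List.mem_map.1 hx
        have := sizeOf_lt_of_memL hk
        exact ih G k (by omega) hG (hH.memL hk)
    · intro x hx
      rcases List.mem_append.1 hx with hx | hx
      · obtain ⟨g, hg, rfl⟩ := List.mem_map.1 hx
        have := sizeOf_lt_of_memR hg
        exact ih g H (by omega) (hG.memR hg) hH
      · obtain ⟨k, hk, rfl⟩ := List.mem_map.1 hx
        have := sizeOf_lt_of_memR hk
        exact ih G k (by omega) hG (hH.memR hk)
    · intro hnil s hs
      rw [← add_eq] at hs
      simp only [List.append_eq_nil_iff, List.map_eq_nil_iff] at hnil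
      obtain ⟨u, hu, v, hv, rfl⟩ := atomList_add hs
      exact add_le_add (Guaranteed_la hG hnil.1 u hu) (Guaranteed_la hH hnil.2 v hv)
    · intro hnil s hs
      rw [← add_eq] at hs
      simp only [List.append_eq_nil_iff, List.map_eq_nil_iff] at hnil
      obtain ⟨u, hu, v, hv, rfl⟩ := atomList_add hs
      exact add_le_add (Guaranteed_ra hG hnil.1 u hu) (Guaranteed_ra hH hnil.2 v hv)

theorem Guaranteed.add {G H : SG} (hG : G.Guaranteed) (hH : H.Guaranteed) :
    (G.add H).Guaranteed :=
  Guaranteed_add_aux (sizeOf G + sizeOf H) G H le_rfl hG hH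

theorem add_num_stops_aux :
    ∀ (n : ℕ) (P : SG), sizeOf P ≤ n → ∀ c : ℝ,
      Ls (P.add (num c)) = Ls P + c ∧ Rs (P.add (num c)) = Rs P + c := by
  intro n
  induction n with
  | zero =>
    intro P hsz
    have := sizeOf_pos P; omega
  | succ n ih =>
    intro P hsz c
    constructor
    · rcases eq_or_ne P.L [] with h | h
      · have hnil : (P.add (num c)).L = [] := L_add_eq_nil.2 ⟨h, rfl⟩
        rw [Ls_of_L_nil hnil, la_add_s16, la_num, Ls_of_L_nil h]
      · have hne : (P.add (num c)).L ≠ [] := by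
          rw [Ne, L_add_eq_nil]; exact fun hc => h hc.1
        apply le_antisymm
        · obtain ⟨x, hx, hLs⟩ := exists_Ls_eq hne
          rcases mem_addL hx with ⟨g, hg, rfl⟩ | ⟨k, hk, _⟩
          · have hsg := sizeOf_lt_of_memL hg
            rw [hLs, (ih g (by omega) c).2]
            have := Rs_le_Ls_of_memL hg
            linarith
          · simp at hk
        · obtain ⟨p, hp, hLs⟩ := exists_Ls_eq h
          have hsp := sizeOf_lt_of_memL hp
          have h2 := Rs_le_Ls_of_memL (addL_memL (H := num c) hp)
          rw [(ih p (by omega) c).2] at h2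
          rw [hLs]; linarith
    · rcases eq_or_ne P.R [] with h | h
      · have hnil : (P.add (num c)).R = [] := R_add_eq_nil.2 ⟨h, rfl⟩
        rw [Rs_of_R_nil hnil, ra_add_s16, ra_num, Rs_of_R_nil h]
      · have hne : (P.add (num c)).R ≠ [] := by
          rw [Ne, R_add_eq_nil]; exact fun hc => h hc.1
        apply le_antisymm
        · obtain ⟨p, hp, hRs⟩ := exists_Rs_eq h
          have hsp := sizeOf_lt_of_memR hp
          have h2 := Rs_le_Ls_of_memR (addR_memL (H := num c) hp)
          rw [(ih p (by omega) c).1] at h2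
          rw [hRs]; linarith
        · obtain ⟨x, hx, hRs⟩ := exists_Rs_eq hne
          rcases mem_addR hx with ⟨g, hg, rfl⟩ | ⟨k, hk, _⟩
          · have hsg := sizeOf_lt_of_memR hg
            rw [hRs, (ih g (by omega) c).1]
            have := Rs_le_Ls_of_memR hg
            linarith
          · simp at hk

theorem Ls_add_num (P : SG) (c : ℝ) : Ls (P.add (num c)) = Ls P + c :=
  (add_num_stops_aux (sizeOf P) P le_rfl c).1

theorem Rs_add_num (P : SG) (c : ℝ) : Rs (P.add (num c)) = Rs P + c :=
  (add_num_stops_aux (sizeOf P) P le_rfl c).2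

theorem add_add_num_stops_aux :
    ∀ (n : ℕ) (P Q : SG), sizeOf P + sizeOf Q ≤ n → ∀ c : ℝ,
      Ls (P.add (Q.add (num c))) = Ls (P.add Q) + c ∧
      Rs (P.add (Q.add (num c))) = Rs (P.add Q) + c := by
  intro n
  induction n with
  | zero =>
    intro P Q hsz
    have := sizeOf_pos P; have := sizeOf_pos Q; omega
  | succ n ih =>
    intro P Q hsz c
    constructor
    · by_cases h : P.L = [] ∧ Q.L = []
      · have hnil : (P.add (Q.add (num c))).L = [] :=
          L_add_eq_nil.2 ⟨h.1, L_add_eq_nil.2 ⟨h.2, rfl⟩⟩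
        have hnil' : (P.add Q).L = [] := L_add_eq_nil.2 h
        rw [Ls_of_L_nil hnil, Ls_of_L_nil hnil', la_add_s16, la_add_s16, la_add_s16, la_num]
        ring
      · have hne : (P.add (Q.add (num c))).L ≠ [] := by
          rw [Ne, L_add_eq_nil, L_add_eq_nil]
          exact fun hc => h ⟨hc.1, hc.2.1⟩
        have hne' : (P.add Q).L ≠ [] := by
          rw [Ne, L_add_eq_nil]; exact h
        apply le_antisymm
        · obtain ⟨x, hx, hLs⟩ := exists_Ls_eq hne
          rcases mem_addL hx with ⟨p, hp, rfl⟩ | ⟨y, hy, rfl⟩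
          · have hsp := sizeOf_lt_of_memL hp
            rw [hLs, (ih p Q (by omega) c).2]
            have := Rs_le_Ls_of_memL (addL_memL (H := Q) hp)
            linarith
          · rcases mem_addL hy with ⟨q, hq, rfl⟩ | ⟨k, hk, _⟩
            · have hsq := sizeOf_lt_of_memL hq
              rw [hLs, (ih P q (by omega) c).2]
              have := Rs_le_Ls_of_memL (addL_memR (G := P) hq)
              linarith
            · simp at hk
        · obtain ⟨x, hx, hLs⟩ := exists_Ls_eq hne'
          rcases mem_addL hx with ⟨p, hp, rfl⟩ | ⟨q, hq, rfl⟩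
          · have hsp := sizeOf_lt_of_memL hp
            have h2 := Rs_le_Ls_of_memL (addL_memL (H := Q.add (num c)) hp)
            rw [(ih p Q (by omega) c).2] at h2
            rw [hLs]; linarith
          · have hsq := sizeOf_lt_of_memL hq
            have h2 := Rs_le_Ls_of_memL
              (addL_memR (G := P) (addL_memL (H := num c) hq))
            rw [(ih P q (by omega) c).2] at h2
            rw [hLs]; linarith
    · by_cases h : P.R = [] ∧ Q.R = []
      · have hnil : (P.add (Q.add (num c))).R = [] :=
          R_add_eq_nil.2 ⟨h.1, R_add_eq_nil.2 ⟨h.2, rfl⟩⟩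
        have hnil' : (P.add Q).R = [] := R_add_eq_nil.2 h
        rw [Rs_of_R_nil hnil, Rs_of_R_nil hnil', ra_add_s16, ra_add_s16, ra_add_s16, ra_num]
        ring
      · have hne : (P.add (Q.add (num c))).R ≠ [] := by
          rw [Ne, R_add_eq_nil, R_add_eq_nil]
          exact fun hc => h ⟨hc.1, hc.2.1⟩
        have hne' : (P.add Q).R ≠ [] := by
          rw [Ne, R_add_eq_nil]; exact h
        apply le_antisymm
        · obtain ⟨x, hx, hRs⟩ := exists_Rs_eq hne'
          rcases mem_addR hx with ⟨p, hp, rfl⟩ | ⟨q, hq, rfl⟩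
          · have hsp := sizeOf_lt_of_memR hp
            have h2 := Rs_le_Ls_of_memR (addR_memL (H := Q.add (num c)) hp)
            rw [(ih p Q (by omega) c).1] at h2
            rw [hRs]; linarith
          · have hsq := sizeOf_lt_of_memR hq
            have h2 := Rs_le_Ls_of_memR
              (addR_memR (G := P) (addR_memL (H := num c) hq))
            rw [(ih P q (by omega) c).1] at h2
            rw [hRs]; linarith
        · obtain ⟨x, hx, hRs⟩ := exists_Rs_eq hne
          rcases mem_addR hx with ⟨p, hp, rfl⟩ | ⟨y, hy, rfl⟩
          · have hsp := sizeOf_lt_of_memR hp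
            rw [hRs, (ih p Q (by omega) c).1]
            have := Rs_le_Ls_of_memR (addR_memL (H := Q) hp)
            linarith
          · rcases mem_addR hy with ⟨q, hq, rfl⟩ | ⟨k, hk, _⟩
            · have hsq := sizeOf_lt_of_memR hq
              rw [hRs, (ih P q (by omega) c).1]
              have := Rs_le_Ls_of_memR (addR_memR (G := P) hq)
              linarith
            · simp at hk

theorem Ls_add_add_num (P Q : SG) (c : ℝ) :
    Ls (P.add (Q.add (num c))) = Ls (P.add Q) + c :=
  (add_add_num_stops_aux (sizeOf P + sizeOf Q) P Q le_rfl c).1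

theorem Rs_add_add_num (P Q : SG) (c : ℝ) :
    Rs (P.add (Q.add (num c))) = Rs (P.add Q) + c :=
  (add_add_num_stops_aux (sizeOf P + sizeOf Q) P Q le_rfl c).2

theorem not_Ge_elim {A B : SG} (h : ¬ A.Ge B) :
    ∃ X, X.Guaranteed ∧
      (Ls (A.add X) < Ls (B.add X) ∨ Rs (A.add X) < Rs (B.add X)) := by
  unfold Ge at h
  obtain ⟨X, hX⟩ := Classical.not_forall.1 h
  rw [Classical.not_imp] at hX
  obtain ⟨hg, hq⟩ := hX
  rcases not_and_or.1 hq with hq | hq <;> rw [not_le] at hq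
  · exact ⟨X, hg, Or.inl hq⟩
  · exact ⟨X, hg, Or.inr hq⟩

theorem exists_X {A B : SG} (h : ¬ A.Ge B) :
    ∃ X, X.Guaranteed ∧ Ls (A.add X) < 0 ∧ 0 < Ls (B.add X) := by
  obtain ⟨X₀, hg, hq⟩ := not_Ge_elim h
  rcases hq with hq | hq
  · refine ⟨X₀.add (num (-(Ls (A.add X₀) + Ls (B.add X₀)) / 2)),
      hg.add (Guaranteed_num _), ?_, ?_⟩
    · rw [Ls_add_add_num]; linarith
    · rw [Ls_add_add_num]; linarith
  · -- turn the Right-stop witness into a Left-stop witness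
    set c : ℝ := -(Rs (A.add X₀) + Rs (B.add X₀)) / 2 with hc
    set W : SG := X₀.add (num c) with hW
    have hWg : W.Guaranteed := hg.add (Guaranteed_num _)
    have hW1 : Rs (A.add W) < 0 := by rw [hW, Rs_add_add_num]; linarith
    have hW2 : 0 < Rs (B.add W) := by rw [hW, Rs_add_add_num]; linarith
    set U : ℝ := (atomList A).foldr max 0 with hU
    set X : SG := mk 0 0 [W] [num (-(U + 1))] with hX
    refine ⟨X, ?_, ?_, ?_⟩
    · refine Guaranteed_mk' ?_ ?_ (by simp) (by simp)
      · intro x hx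
        rw [List.mem_singleton] at hx
        subst hx; exact hWg
      · intro x hx
        rw [List.mem_singleton] at hx
        subst hx; exact Guaranteed_num _
    · have hne : (A.add X).L ≠ [] := by
        rw [Ne, L_add_eq_nil, hX]; simp
      obtain ⟨x, hx, hLs⟩ := exists_Ls_eq hne
      rw [hLs]
      rcases mem_addL hx with ⟨g, hg', rfl⟩ | ⟨k, hk, rfl⟩
      · have hmem : g.add (num (-(U + 1))) ∈ (g.add X).R :=
          addR_memR (show num (-(U + 1)) ∈ X.R by rw [hX]; simp)
        have h1 := Rs_le_Ls_of_memR hmem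
        rw [Ls_add_num] at h1
        have h2 : Ls g ≤ U :=
          (stops_le g U (fun s hs => le_foldr_max 0 (atomList_subL hg' hs))).1
        linarith
      · have hk' : k ∈ [W] := hk
        rw [List.mem_singleton] at hk'
        subst hk'; exact hW1
    · have hmem : B.add W ∈ (B.add X).L := addL_memR (show W ∈ X.L by rw [hX]; simp)
      have := Rs_le_Ls_of_memL hmem
      linarith

theorem exists_Y {A B : SG} (h : ¬ A.Ge B) :
    ∃ Y, Y.Guaranteed ∧ Rs (A.add Y) < 0 ∧ 0 < Rs (B.add Y) := by
  obtain ⟨X₀, hg, hq⟩ := not_Ge_elim h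
  rcases hq with hq | hq
  swap
  · refine ⟨X₀.add (num (-(Rs (A.add X₀) + Rs (B.add X₀)) / 2)),
      hg.add (Guaranteed_num _), ?_, ?_⟩
    · rw [Rs_add_add_num]; linarith
    · rw [Rs_add_add_num]; linarith
  · set c : ℝ := -(Ls (A.add X₀) + Ls (B.add X₀)) / 2 with hc
    set W : SG := X₀.add (num c) with hW
    have hWg : W.Guaranteed := hg.add (Guaranteed_num _)
    have hW1 : Ls (A.add W) < 0 := by rw [hW, Ls_add_add_num]; linarith
    have hW2 : 0 < Ls (B.add W) := by rw [hW, Ls_add_add_num]; linarith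
    set V : ℝ := (atomList B).foldr min 0 with hV
    set Y : SG := mk 0 0 [num (1 - V)] [W] with hY
    refine ⟨Y, ?_, ?_, ?_⟩
    · refine Guaranteed_mk' ?_ ?_ (by simp) (by simp)
      · intro x hx
        rw [List.mem_singleton] at hx
        subst hx; exact Guaranteed_num _
      · intro x hx
        rw [List.mem_singleton] at hx
        subst hx; exact hWg
    · have hmem : A.add W ∈ (A.add Y).R := addR_memR (show W ∈ Y.R by rw [hY]; simp)
      have := Rs_le_Ls_of_memR hmem
      linarith
    · have hne : (B.add Y).R ≠ [] := by
        rw [Ne, R_add_eq_nil, hY]; simp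
      obtain ⟨x, hx, hRs⟩ := exists_Rs_eq hne
      rw [hRs]
      rcases mem_addR hx with ⟨g, hg', rfl⟩ | ⟨k, hk, rfl⟩
      · have hmem : g.add (num (1 - V)) ∈ (g.add Y).L :=
          addL_memR (show num (1 - V) ∈ Y.L by rw [hY]; simp)
        have h1 := Rs_le_Ls_of_memL hmem
        rw [Rs_add_num] at h1
        have h2 : V ≤ Rs g :=
          (le_stops g V (fun s hs => foldr_min_le 0 (atomList_subR hg' hs))).2
        linarith
      · have hk' : k ∈ [W] := hk
        rw [List.mem_singleton] at hk'
        subst hk'; exact hW2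

/-- Linking criterion: `G` is linked to `H` iff no `G^L ≽ H` and no
`H^R ≼ G`. -/
theorem linked_iff (G H : SG) (hG : G.Guaranteed) (hH : H.Guaranteed) :
    Linked G H ↔
      (∀ Gl ∈ G.L, ¬ Gl.Ge H) ∧ (∀ Hr ∈ H.R, ¬ G.Ge Hr) := by
  constructor
  · rintro ⟨T, hTg, h1, h2⟩
    constructor
    · intro Gl hGl hGe
      obtain ⟨e1, e2⟩ := hGe T hTg
      have := Rs_le_Ls_of_memL (addL_memL (H := T) hGl)
      linarith
    · intro Hr hHr hGe
      obtain ⟨e1, e2⟩ := hGe T hTg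
      have := Rs_le_Ls_of_memR (addR_memL (H := T) hHr)
      linarith
  · rintro ⟨hXcrit, hYcrit⟩
    have hX : ∀ Gl ∈ G.L, ∃ X, X.Guaranteed ∧ Ls (Gl.add X) < 0 ∧ 0 < Ls (H.add X) :=
      fun Gl hGl => exists_X (hXcrit Gl hGl)
    have hY : ∀ Hr ∈ H.R, ∃ Y, Y.Guaranteed ∧ Rs (G.add Y) < 0 ∧ 0 < Rs (Hr.add Y) :=
      fun Hr hHr => exists_Y (hYcrit Hr hHr)
    choose fX hfX1 hfX2 hfX3 using hX
    choose fY hfY1 hfY2 hfY3 using hY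
    set Xs : List SG := G.L.attach.map (fun g => fX g.1 g.2) with hXs
    set Ys : List SG := H.R.attach.map (fun r => fY r.1 r.2) with hYs
    set AL : List ℝ := ((Ys ++ Xs).map atomList).flatten with hAL
    set lo : ℝ := AL.foldr min 0 with hlo
    set hi : ℝ := AL.foldr max 0 with hhi
    set al : ℝ := min lo (-1 - G.la) with hal
    set be : ℝ := max hi (1 - H.ra) with hbe
    set T : SG := mk al be Ys Xs with hT
    have hmemXs : ∀ x ∈ Xs, ∃ Gl, ∃ h : Gl ∈ G.L, x = fX Gl h := by
      intro x hx
      rw [hXs] at hx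
      obtain ⟨g, _, rfl⟩ := List.mem_map.1 hx
      exact ⟨g.1, g.2, rfl⟩
    have hmemYs : ∀ y ∈ Ys, ∃ Hr, ∃ h : Hr ∈ H.R, y = fY Hr h := by
      intro y hy
      rw [hYs] at hy
      obtain ⟨r, _, rfl⟩ := List.mem_map.1 hy
      exact ⟨r.1, r.2, rfl⟩
    have halo : al ≤ lo := min_le_left _ _
    have hlo0 : lo ≤ 0 := foldr_min_le_d 0 AL
    have h0hi : (0:ℝ) ≤ hi := d_le_foldr_max 0 AL
    have hbeh : hi ≤ be := le_max_left _ _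
    have hatoms : ∀ x ∈ Ys ++ Xs, ∀ s ∈ x.atomList, lo ≤ s ∧ s ≤ hi := by
      intro x hx s hs
      have hmem : s ∈ AL := by
        rw [hAL]
        exact List.mem_flatten.2 ⟨x.atomList, List.mem_map_of_mem hx, hs⟩
      exact ⟨foldr_min_le 0 hmem, le_foldr_max 0 hmem⟩
    have hTg : T.Guaranteed := by
      rw [hT]
      refine Guaranteed_mk' ?_ ?_ ?_ ?_
      · intro x hx
        obtain ⟨Hr, hHr, rfl⟩ := hmemYs x hx
        exact hfY1 _ _
      · intro x hx
        obtain ⟨Gl, hGl, rfl⟩ := hmemXs x hx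
        exact hfX1 _ _
      · intro hnil s hs
        rw [atomList_eq_s16, if_pos hnil] at hs
        rcases List.mem_append.1 hs with hs | hs
        · rw [List.mem_singleton] at hs
          subst hs; exact le_rfl
        · by_cases hXnil : Xs = []
          · rw [if_pos hXnil, List.mem_singleton] at hs
            subst hs; linarith
          · rw [if_neg hXnil] at hs
            obtain ⟨l', hl', hsl⟩ := List.mem_flatten.1 hs
            obtain ⟨x, hx, rfl⟩ := List.mem_map.1 hl'
            have := (hatoms x (List.mem_append_right _ hx) s hsl).1
            linarith
      · intro hnil s hs
        rw [atomList_eq_s16] at hs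
        rcases List.mem_append.1 hs with hs | hs
        · by_cases hYnil : Ys = []
          · rw [if_pos hYnil, List.mem_singleton] at hs
            subst hs; linarith
          · rw [if_neg hYnil] at hs
            obtain ⟨l', hl', hsl⟩ := List.mem_flatten.1 hs
            obtain ⟨x, hx, rfl⟩ := List.mem_map.1 hl'
            have := (hatoms x (List.mem_append_left _ hx) s hsl).2
            linarith
        · rw [if_pos hnil, List.mem_singleton] at hs
          subst hs; exact le_rfl
    refine ⟨T, hTg, ?_, ?_⟩
    · rcases eq_or_ne (G.add T).L [] with hnil | hne
      · rw [Ls_of_L_nil hnil, la_add_s16]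
        have h1 : al ≤ -1 - G.la := min_le_right _ _
        have h2 : T.la = al := by rw [hT]; exact la_mk _ _ _ _
        linarith [h2 ▸ h1]
      · obtain ⟨x, hx, hLs⟩ := exists_Ls_eq hne
        rw [hLs]
        rcases mem_addL hx with ⟨Gl, hGl, rfl⟩ | ⟨y, hy, rfl⟩
        · have hXmem : fX Gl hGl ∈ Xs := by
            rw [hXs]
            exact List.mem_map.2 ⟨⟨Gl, hGl⟩, List.mem_attach _ _, rfl⟩
          have hmem : Gl.add (fX Gl hGl) ∈ (Gl.add T).R :=
            addR_memR (show fX Gl hGl ∈ T.R by rw [hT]; exact hXmem)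
          have := Rs_le_Ls_of_memR hmem
          linarith [hfX2 Gl hGl]
        · have hy' : y ∈ Ys := by rw [hT] at hy; exact hy
          obtain ⟨Hr, hHr, rfl⟩ := hmemYs y hy'
          exact hfY2 _ _
    · rcases eq_or_ne (H.add T).R [] with hnil | hne
      · rw [Rs_of_R_nil hnil, ra_add_s16]
        have h1 : 1 - H.ra ≤ be := le_max_right _ _
        have h2 : T.ra = be := by rw [hT]; exact ra_mk _ _ _ _
        linarith [h2 ▸ h1]
      · obtain ⟨x, hx, hRs⟩ := exists_Rs_eq hne
        rw [hRs]
        rcases mem_addR hx with ⟨Hr, hHr, rfl⟩ | ⟨y, hy, rfl⟩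
        · have hYmem : fY Hr hHr ∈ Ys := by
            rw [hYs]
            exact List.mem_map.2 ⟨⟨Hr, hHr⟩, List.mem_attach _ _, rfl⟩
          have hmem : Hr.add (fY Hr hHr) ∈ (Hr.add T).L :=
            addL_memR (show fY Hr hHr ∈ T.L by rw [hT]; exact hYmem)
          have := Rs_le_Ls_of_memL hmem
          linarith [hfY3 Hr hHr]
        · have hy' : y ∈ Xs := by rw [hT] at hy; exact hy
          obtain ⟨Gl, hGl, rfl⟩ := hmemXs y hy'
          exact hfX3 _ _

end SG
end
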